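/- Let P, Q be graded posets with rank functions r, let f : P → Q be order-preserving with r(f(x)) ≤ r(x) for all x ∈ P, let G, H be copresheaves of abelian groups on P, Q respectively, and let t : G ⇝ H be an f-homomorphism. Suppose (P,G) and (Q,H) admit cellular forms Λ(P,G) and Λ(Q,H). Then there exists a unique ℤ-linear map Φ : Λ(P,G) → Λ(Q,H) such that: (1) Φ maps Λ(P,G)_x into Λ(Q,H)_{f(x)} and satisfies Φ∂ = ∂Φ on Λ(P,G)_x whenever r(f(x)) = r(x); (2) Φ = 0 on Λ(P,G)_x whenever r(f(x)) < r(x); (3) Φ equals t on Λ(P,G)_{x₀} = G(x₀) for every rank-zero element x₀. Moreover this unique Φ satisfies Φ∂ = ∂Φ on all of Λ(P,G). -/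

import Mathlib

open CategoryTheory Classical

/-- A rank function making `P` a graded poset: minimal elements have rank `0`, the rank
increases by `1` along covering relations, and is strictly monotone. -/
def IsGrading (P : Type) [PartialOrder P] (r : P → ℕ) : Prop :=
  (∀ x : P, IsMin x → r x = 0) ∧ (∀ x y : P, x ⋖ y → r y = r x + 1) ∧
    ∀ x y : P, x < y → r x < r y

/-- A cellular form of a pair `(P, G)` where `P` is a poset graded by `r` and `G` is a
copresheaf of abelian groups on `P` (a functor `P ⥤ AddCommGrp`).

It consists of a `P`-graded differential `ℤ`-module `Λ = ⊕_{x∈P} Λ_x`, the differential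
being recorded by its components `δ x y : Λ_x →+ Λ_y`, together with the maps
`e x y : Λ_y →+ G(x)` (for `y ≤ x` of rank `0`) realising the isomorphism of copresheaves
`(x ↦ H₀(Λ_{≤x})) ≅ G`, such that:

* `∂` maps `Λ_x` into `⊕_{y⋖x} Λ_y` (fields `delta_support`, `delta_fin`) and `∂∂ = 0`
  (field `delta_delta`); hence each `Λ_{≤x} = ⊕_{y≤x} Λ_y` is a chain complex graded by
  rank;
* `Λ_{≤x}` has trivial homology in all positive degrees (field `exact_pos`: every cycle
  of positive degree supported below `x` is a boundary of a chain supported below `x`);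
* the copresheaf `x ↦ H₀(Λ_{≤x})` (whose extension maps are induced by the inclusions
  `Λ_{≤x} ↪ Λ_{≤x'}`) is isomorphic to `G` via the maps induced by `e` (fields
  `e_natural`, `e_surj`, `e_ker`: `e` is compatible with the extension maps of `G`, and
  the induced map `H₀(Λ_{≤x}) → G(x)` is surjective and injective — an element of degree
  `0` maps to `0` iff it is a boundary). -/
structure CellularForm (P : Type) [PartialOrder P] (r : P → ℕ)
    (G : P ⥤ AddCommGrpCat.{0}) where
  Λ : P → Type
  [grp : ∀ x, AddCommGroup (Λ x)]
  δ : ∀ x y : P, Λ x →+ Λ y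
  e : ∀ x y : P, y ≤ x → r y = 0 → (Λ y →+ G.obj x)
  delta_support : ∀ x y : P, ¬(y ⋖ x) → δ x y = 0
  delta_fin : ∀ (x : P) (a : Λ x), {y : P | δ x y a ≠ 0}.Finite
  delta_delta : ∀ (x z : P) (a : Λ x), (∑ᶠ y : P, δ y z (δ x y a)) = 0
  exact_pos : ∀ (x : P) (q : ℕ) (a : ∀ y : P, Λ y),
    {y : P | a y ≠ 0}.Finite →
    (∀ y, a y ≠ 0 → y ≤ x ∧ r y = q + 1) →
    (∀ z, (∑ᶠ y : P, δ y z (a y)) = 0) →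
    ∃ b : ∀ y : P, Λ y, {y : P | b y ≠ 0}.Finite ∧
      (∀ y, b y ≠ 0 → y ≤ x ∧ r y = q + 2) ∧ ∀ y, a y = ∑ᶠ w : P, δ w y (b w)
  e_natural : ∀ (x x' y : P) (h : y ≤ x) (h' : x ≤ x') (h0 : r y = 0) (a : Λ y),
    G.map (homOfLE h') (e x y h h0 a) = e x' y (h.trans h') h0 a
  e_surj : ∀ (x : P) (g : G.obj x), ∃ a : ∀ y : P, Λ y,
    {y : P | a y ≠ 0}.Finite ∧ (∀ y, a y ≠ 0 → y ≤ x ∧ r y = 0) ∧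
    (∑ᶠ y : P, if h : y ≤ x ∧ r y = 0 then e x y h.1 h.2 (a y) else 0) = g
  e_ker : ∀ (x : P) (a : ∀ y : P, Λ y), {y : P | a y ≠ 0}.Finite →
    (∀ y, a y ≠ 0 → y ≤ x ∧ r y = 0) →
    ((∑ᶠ y : P, if h : y ≤ x ∧ r y = 0 then e x y h.1 h.2 (a y) else 0) = 0 ↔
      ∃ b : ∀ y : P, Λ y, {y : P | b y ≠ 0}.Finite ∧
        (∀ y, b y ≠ 0 → y ≤ x ∧ r y = 1) ∧ ∀ y, a y = ∑ᶠ w : P, δ w y (b w))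

attribute [instance] CellularForm.grp

/-- The property, for a given `P`-graded differential `ℤ`-module `(Λ, δ)`, of being a
cellular form of `(P, G)`; see `CellularForm` for a description of the fields, the only
difference being that here the realising maps `e` are merely required to exist. -/
structure IsCellularForm (P : Type) [PartialOrder P] (r : P → ℕ)
    (G : P ⥤ AddCommGrpCat.{0}) (Λ : P → Type) [inst : ∀ x, AddCommGroup (Λ x)]
    (δ : ∀ x y : P, Λ x →+ Λ y) : Prop where
  delta_support : ∀ x y : P, ¬(y ⋖ x) → δ x y = 0
  delta_fin : ∀ (x : P) (a : Λ x), {y : P | δ x y a ≠ 0}.Finite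
  delta_delta : ∀ (x z : P) (a : Λ x), (∑ᶠ y : P, δ y z (δ x y a)) = 0
  exact_pos : ∀ (x : P) (q : ℕ) (a : ∀ y : P, Λ y),
    {y : P | a y ≠ 0}.Finite →
    (∀ y, a y ≠ 0 → y ≤ x ∧ r y = q + 1) →
    (∀ z, (∑ᶠ y : P, δ y z (a y)) = 0) →
    ∃ b : ∀ y : P, Λ y, {y : P | b y ≠ 0}.Finite ∧
      (∀ y, b y ≠ 0 → y ≤ x ∧ r y = q + 2) ∧ ∀ y, a y = ∑ᶠ w : P, δ w y (b w)
  hom_zero : ∃ e : ∀ x y : P, y ≤ x → r y = 0 → (Λ y →+ G.obj x),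
    (∀ (x x' y : P) (h : y ≤ x) (h' : x ≤ x') (h0 : r y = 0) (a : Λ y),
      G.map (homOfLE h') (e x y h h0 a) = e x' y (h.trans h') h0 a) ∧
    (∀ (x : P) (g : G.obj x), ∃ a : ∀ y : P, Λ y,
      {y : P | a y ≠ 0}.Finite ∧ (∀ y, a y ≠ 0 → y ≤ x ∧ r y = 0) ∧
      (∑ᶠ y : P, if h : y ≤ x ∧ r y = 0 then e x y h.1 h.2 (a y) else 0) = g) ∧
    (∀ (x : P) (a : ∀ y : P, Λ y), {y : P | a y ≠ 0}.Finite →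
      (∀ y, a y ≠ 0 → y ≤ x ∧ r y = 0) →
      ((∑ᶠ y : P, if h : y ≤ x ∧ r y = 0 then e x y h.1 h.2 (a y) else 0) = 0 ↔
        ∃ b : ∀ y : P, Λ y, {y : P | b y ≠ 0}.Finite ∧
          (∀ y, b y ≠ 0 → y ≤ x ∧ r y = 1) ∧ ∀ y, a y = ∑ᶠ w : P, δ w y (b w)))
/-- Transport along an equality of indices, as a homomorphism between the graded pieces
of a cellular form. -/
def CellularForm.cast {Q : Type} [PartialOrder Q] {r' : Q → ℕ} {H : Q ⥤ AddCommGrpCat.{0}}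
    (C' : CellularForm Q r' H) {a b : Q} (h : a = b) : C'.Λ a →+ C'.Λ b := by
  subst h; exact AddMonoidHom.id _

section
variable {P Q : Type} [PartialOrder P] [PartialOrder Q] {r : P → ℕ} {r' : Q → ℕ}
  {f : P → Q} {G : P ⥤ AddCommGrpCat.{0}} {H : Q ⥤ AddCommGrpCat.{0}}

/-- The defining conditions for a morphism of cellular forms `Φ : Λ(P,G) → Λ(Q,H)`
associated with `f` and the `f`-homomorphism `t`:
(1) `Φ` maps `Λ(P,G)_x` into `Λ(Q,H)_{f(x)}` (by its very type) and commutes with the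
differentials on `Λ(P,G)_x` whenever `r(f(x)) = r(x)` (the `z`-component of `Φ(∂a)`,
i.e. the sum of `Φ_y (∂a)_y` over `y` with `f y = z`, equals the `z`-component of
`∂(Φ a)`);
(2) `Φ = 0` on `Λ(P,G)_x` whenever `r(f(x)) < r(x)`;
(3) `Φ` equals `t` on `Λ(P,G)_{x₀} = G(x₀)` for rank-zero `x₀` (under the
identifications `e` of the rank-zero pieces with the values of the copresheaves). -/
def IsCellularMorphism (hfr : ∀ x, r' (f x) ≤ r x)
    (t : ∀ x : P, G.obj x →+ H.obj (f x))
    (C : CellularForm P r G) (C' : CellularForm Q r' H)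
    (Φ : ∀ x : P, C.Λ x →+ C'.Λ (f x)) : Prop :=
  (∀ x : P, r' (f x) = r x → ∀ (a : C.Λ x) (z : Q),
    (∑ᶠ y : P, if h : f y = z then (C'.cast h) (Φ y (C.δ x y a)) else 0) =
      C'.δ (f x) z (Φ x a)) ∧
  (∀ x : P, r' (f x) < r x → Φ x = 0) ∧
  (∀ (x : P) (h0 : r x = 0) (a : C.Λ x),
    C'.e (f x) (f x) le_rfl (Nat.le_zero.mp (h0 ▸ hfr x)) (Φ x a) =
      t x (C.e x x le_rfl h0 a))

end

section Helpers

theorem finsum_swap {α β M : Type*} [AddCommMonoid M] (F : α → β → M)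
    (s : Set α) (t : Set β) (hs : s.Finite) (ht : t.Finite)
    (h : ∀ a b, F a b ≠ 0 → a ∈ s ∧ b ∈ t) :
    ∑ᶠ a, ∑ᶠ b, F a b = ∑ᶠ b, ∑ᶠ a, F a b := by
  classical
  have h1 : ∀ a, Function.support (F a) ⊆ ↑ht.toFinset := by
    intro a b hb; simpa using (h a b hb).2
  have h2 : ∀ b, Function.support (fun a => F a b) ⊆ ↑hs.toFinset := by
    intro b a ha; simpa using (h a b ha).1
  rw [finsum_eq_sum_of_support_subset (fun a => ∑ᶠ b, F a b) (s := hs.toFinset) ?_,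
      finsum_eq_sum_of_support_subset (fun b => ∑ᶠ a, F a b) (s := ht.toFinset) ?_]
  · calc (∑ a ∈ hs.toFinset, ∑ᶠ b, F a b)
        = ∑ a ∈ hs.toFinset, ∑ b ∈ ht.toFinset, F a b := by
          refine Finset.sum_congr rfl fun a _ => ?_
          exact finsum_eq_sum_of_support_subset _ (h1 a)
      _ = ∑ b ∈ ht.toFinset, ∑ a ∈ hs.toFinset, F a b := Finset.sum_comm
      _ = ∑ b ∈ ht.toFinset, ∑ᶠ a, F a b := by
          refine Finset.sum_congr rfl fun b _ => ?_
          exact (finsum_eq_sum_of_support_subset _ (h2 b)).symm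
  · intro b hb
    have : ∃ a, F a b ≠ 0 := by
      by_contra hc; push_neg at hc
      exact hb (finsum_eq_zero_of_forall_eq_zero hc)
    obtain ⟨a, ha⟩ := this
    simpa using (h a b ha).2
  · intro a ha
    have : ∃ b, F a b ≠ 0 := by
      by_contra hc; push_neg at hc
      exact ha (finsum_eq_zero_of_forall_eq_zero hc)
    obtain ⟨b, hb⟩ := this
    simpa using (h a b hb).1

variable {P : Type} [PartialOrder P] {r : P → ℕ} {G : P ⥤ AddCommGrpCat.{0}}

theorem rank_mono (hr : IsGrading P r) {x y : P} (h : x ≤ y) : r x ≤ r y := by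
  rcases eq_or_lt_of_le h with rfl | h
  · exact le_rfl
  · exact (hr.2.2 _ _ h).le

theorem rank_eq (hr : IsGrading P r) {x y : P} (h : x ≤ y) (hle : r y ≤ r x) : x = y := by
  rcases eq_or_lt_of_le h with rfl | h
  · rfl
  · exact absurd (hr.2.2 _ _ h) (not_lt.2 hle)

theorem cast_self (C : CellularForm P r G) {a : P} (h : a = a) (v : C.Λ a) :
    C.cast h v = v := rfl

theorem cov_of_delta (C : CellularForm P r G) {x y : P} {a : C.Λ x}
    (h : C.δ x y a ≠ 0) : y ⋖ x := by
  by_contra hc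
  rw [C.delta_support x y hc] at h
  exact h rfl

theorem delta_inj (hr : IsGrading P r) (C : CellularForm P r G) {x : P}
    (hx : 1 ≤ r x) {v : C.Λ x} (hv : ∀ z, C.δ x z v = 0) : v = 0 := by
  classical
  obtain ⟨q, hq⟩ : ∃ q, r x = q + 1 := ⟨r x - 1, by omega⟩
  set a : ∀ y : P, C.Λ y := fun y => if h : x = y then C.cast h v else 0 with ha
  have hsupp : {y : P | a y ≠ 0} ⊆ {x} := by
    intro y hy
    by_contra hne
    simp only [ha, Set.mem_setOf_eq] at hy
    rw [dif_neg (by simpa [eq_comm] using hne)] at hy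
    exact hy rfl
  obtain ⟨b, hbfin, hbrank, hab⟩ := C.exact_pos x q a ((Set.finite_singleton x).subset hsupp)
    (fun y hy => by
      have : y = x := hsupp hy
      subst this; exact ⟨le_rfl, hq⟩)
    (fun z => by
      rw [finsum_eq_single _ x (fun y hy => by
        simp only [ha]; rw [dif_neg (fun h => hy h.symm)]; exact map_zero _)]
      simp only [ha, dif_pos rfl, cast_self]
      exact hv z)
  have hb0 : ∀ y, b y = 0 := by
    intro y
    by_contra hy
    have := hbrank y hy
    have := rank_mono hr this.1
    omega
  have := hab x
  simp only [ha, dif_pos rfl, cast_self] at this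
  rw [this, finsum_eq_zero_of_forall_eq_zero (fun w => by rw [hb0 w]; exact map_zero _)]

theorem e_inj (hr : IsGrading P r) (C : CellularForm P r G) {x : P}
    (hx : r x = 0) {v : C.Λ x} (hv : C.e x x le_rfl hx v = 0) : v = 0 := by
  classical
  set a : ∀ y : P, C.Λ y := fun y => if h : x = y then C.cast h v else 0 with ha
  have hsupp : {y : P | a y ≠ 0} ⊆ {x} := by
    intro y hy
    by_contra hne
    simp only [ha, Set.mem_setOf_eq] at hy
    rw [dif_neg (by simpa [eq_comm] using hne)] at hy
    exact hy rfl
  have hfin : {y : P | a y ≠ 0}.Finite := (Set.finite_singleton x).subset hsupp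
  have hrank : ∀ y, a y ≠ 0 → y ≤ x ∧ r y = 0 := fun y hy => by
    have : y = x := hsupp hy
    subst this; exact ⟨le_rfl, hx⟩
  have hsum : (∑ᶠ y : P, if h : y ≤ x ∧ r y = 0 then C.e x y h.1 h.2 (a y) else 0) = 0 := by
    rw [finsum_eq_single _ x (fun y hy => by
      by_cases h : y ≤ x ∧ r y = 0
      · rw [dif_pos h]
        have : a y = 0 := by simp only [ha]; rw [dif_neg (fun h' => hy h'.symm)]
        rw [this]; exact map_zero _
      · rw [dif_neg h])]
    rw [dif_pos ⟨le_rfl, hx⟩]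
    simpa only [ha, dif_pos rfl, cast_self] using hv
  obtain ⟨b, hbfin, hbrank, hab⟩ := (C.e_ker x a hfin hrank).mp hsum
  have hb0 : ∀ y, b y = 0 := by
    intro y
    by_contra hy
    have h1 := hbrank y hy
    have := rank_mono hr h1.1
    omega
  have := hab x
  simp only [ha, dif_pos rfl, cast_self] at this
  rw [this, finsum_eq_zero_of_forall_eq_zero (fun w => by rw [hb0 w]; exact map_zero _)]

theorem e_surj' (hr : IsGrading P r) (C : CellularForm P r G) {x : P}
    (hx : r x = 0) : Function.Surjective (C.e x x le_rfl hx) := by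
  intro g
  obtain ⟨a, hafin, harank, hasum⟩ := C.e_surj x g
  refine ⟨a x, ?_⟩
  rw [finsum_eq_single _ x (fun y hy => by
    by_cases h : y ≤ x ∧ r y = 0
    · exact absurd (rank_eq hr h.1 (by omega)) hy
    · rw [dif_neg h])] at hasum
  rw [dif_pos ⟨le_rfl, hx⟩] at hasum
  exact hasum

theorem e_bij (hr : IsGrading P r) (C : CellularForm P r G) {x : P}
    (hx : r x = 0) : Function.Bijective (C.e x x le_rfl hx) := by
  constructor
  · intro v w h
    have : C.e x x le_rfl hx (v - w) = 0 := by rw [map_sub, h, sub_self]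
    exact sub_eq_zero.mp (e_inj hr C hx this)
  · exact e_surj' hr C hx

end Helpers
section Main

variable {P Q : Type} [PartialOrder P] [PartialOrder Q] {r : P → ℕ} {r' : Q → ℕ}
  {f : P → Q} {G : P ⥤ AddCommGrpCat.{0}} {H : Q ⥤ AddCommGrpCat.{0}}

/-- The candidate `z`-component of `Φ(∂ a)` for a family `Ψ` of component maps. -/
noncomputable def cch (C : CellularForm P r G) (C' : CellularForm Q r' H)
    (Ψ : ∀ y : P, C.Λ y → C'.Λ (f y)) (x : P) (a : C.Λ x) (z : Q) : C'.Λ z :=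
  ∑ᶠ y : P, if h : f y = z then C'.cast h (Ψ y (C.δ x y a)) else 0

theorem cch_term_supp (C : CellularForm P r G) (C' : CellularForm Q r' H)
    {Ψ : ∀ y : P, C.Λ y → C'.Λ (f y)} (hΨ : ∀ y, Ψ y 0 = 0) (x : P) (a : C.Λ x) (z : Q) :
    (Function.support fun y => if h : f y = z then C'.cast h (Ψ y (C.δ x y a)) else 0) ⊆
      {y | C.δ x y a ≠ 0} := by
  intro y hy
  simp only [Function.mem_support] at hy
  by_contra hd
  simp only [Set.mem_setOf_eq, not_not] at hd
  apply hy
  by_cases h : f y = z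
  · rw [dif_pos h, hd, hΨ y, map_zero]
  · rw [dif_neg h]

theorem cch_supp (C : CellularForm P r G) (C' : CellularForm Q r' H)
    {Ψ : ∀ y : P, C.Λ y → C'.Λ (f y)} (hΨ : ∀ y, Ψ y 0 = 0) (x : P) (a : C.Λ x) :
    {z | cch C C' Ψ x a z ≠ 0} ⊆ f '' {y | C.δ x y a ≠ 0} := by
  intro z hz
  simp only [Set.mem_setOf_eq] at hz
  have : ∃ y, (if h : f y = z then C'.cast h (Ψ y (C.δ x y a)) else 0) ≠ 0 := by
    by_contra hc; push_neg at hc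
    exact hz (finsum_eq_zero_of_forall_eq_zero hc)
  obtain ⟨y, hy⟩ := this
  exact ⟨y, cch_term_supp C C' hΨ x a z hy, by
    by_contra h; rw [dif_neg h] at hy; exact hy rfl⟩

theorem cch_zero (C : CellularForm P r G) (C' : CellularForm Q r' H)
    {Ψ : ∀ y : P, C.Λ y → C'.Λ (f y)} (hΨ : ∀ y, Ψ y 0 = 0) (x : P) (z : Q) :
    cch C C' Ψ x 0 z = 0 := by
  refine finsum_eq_zero_of_forall_eq_zero fun y => ?_
  by_cases h : f y = z
  · rw [dif_pos h, map_zero, hΨ y, map_zero]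
  · rw [dif_neg h]

/-- The component of `Φ` at rank-zero elements, via the identifications given by `e`. -/
noncomputable def phi0 (hr' : IsGrading Q r') (hfr : ∀ x, r' (f x) ≤ r x)
    (t : ∀ x : P, G.obj x →+ H.obj (f x))
    (C : CellularForm P r G) (C' : CellularForm Q r' H)
    (x : P) (hx : r x = 0) : C.Λ x → C'.Λ (f x) := fun a =>
  (AddEquiv.ofBijective (C'.e (f x) (f x) le_rfl (Nat.le_zero.mp ((hfr x).trans hx.le)))
    (e_bij hr' C' _)).symm (t x (C.e x x le_rfl hx a))

/-- The components of `Φ`, defined by recursion on the rank. -/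
noncomputable def phi (hr' : IsGrading Q r') (hfr : ∀ x, r' (f x) ≤ r x)
    (t : ∀ x : P, G.obj x →+ H.obj (f x))
    (C : CellularForm P r G) (C' : CellularForm Q r' H) :
    (n : ℕ) → ∀ x : P, r x = n → C.Λ x → C'.Λ (f x) :=
  Nat.rec (phi0 hr' hfr t C C') (fun n ih x _hx a =>
    if _h : r' (f x) = n + 1 then
      (if hc : ∃ v : C'.Λ (f x), ∀ z : Q, C'.δ (f x) z v =
          cch C C' (fun y b => if hy : r y = n then ih y hy b else 0) x a z
       then hc.choose else 0)
    else 0)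

/-- The extension-by-zero of the rank-`n` components, used in the recursion. -/
noncomputable def prev (hr' : IsGrading Q r') (hfr : ∀ x, r' (f x) ≤ r x)
    (t : ∀ x : P, G.obj x →+ H.obj (f x))
    (C : CellularForm P r G) (C' : CellularForm Q r' H) (n : ℕ) :
    ∀ y : P, C.Λ y → C'.Λ (f y) := fun y b =>
  if hy : r y = n then phi hr' hfr t C C' n y hy b else 0

theorem phi_succ (hr' : IsGrading Q r') (hfr : ∀ x, r' (f x) ≤ r x)
    (t : ∀ x : P, G.obj x →+ H.obj (f x))
    (C : CellularForm P r G) (C' : CellularForm Q r' H)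
    (n : ℕ) (x : P) (hx : r x = n + 1) (a : C.Λ x) :
    phi hr' hfr t C C' (n + 1) x hx a =
      if _h : r' (f x) = n + 1 then
        (if hc : ∃ v : C'.Λ (f x), ∀ z : Q, C'.δ (f x) z v =
            cch C C' (prev hr' hfr t C C' n) x a z
         then hc.choose else 0)
      else 0 := rfl

theorem phi_congr (hr' : IsGrading Q r') (hfr : ∀ x, r' (f x) ≤ r x)
    (t : ∀ x : P, G.obj x →+ H.obj (f x))
    (C : CellularForm P r G) (C' : CellularForm Q r' H)
    {n n' : ℕ} (x : P) (hx : r x = n) (hx' : r x = n') (a : C.Λ x) :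
    phi hr' hfr t C C' n x hx a = phi hr' hfr t C C' n' x hx' a := by
  subst hx; subst hx'; rfl

/-- The underlying function of the morphism `Φ`. -/
noncomputable def Phif (hr' : IsGrading Q r') (hfr : ∀ x, r' (f x) ≤ r x)
    (t : ∀ x : P, G.obj x →+ H.obj (f x))
    (C : CellularForm P r G) (C' : CellularForm Q r' H) :
    ∀ x : P, C.Λ x → C'.Λ (f x) := fun x => phi hr' hfr t C C' (r x) x rfl

theorem Phif_eq (hr' : IsGrading Q r') (hfr : ∀ x, r' (f x) ≤ r x)
    (t : ∀ x : P, G.obj x →+ H.obj (f x))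
    (C : CellularForm P r G) (C' : CellularForm Q r' H)
    {n : ℕ} (x : P) (hx : r x = n) (a : C.Λ x) :
    Phif hr' hfr t C C' x a = phi hr' hfr t C C' n x hx a :=
  phi_congr hr' hfr t C C' x rfl hx a

theorem Phif_vanish (hr' : IsGrading Q r') (hfr : ∀ x, r' (f x) ≤ r x)
    (t : ∀ x : P, G.obj x →+ H.obj (f x))
    (C : CellularForm P r G) (C' : CellularForm Q r' H)
    (x : P) (h : r' (f x) < r x) (a : C.Λ x) :
    Phif hr' hfr t C C' x a = 0 := by
  obtain ⟨n, hn⟩ : ∃ n, r x = n + 1 := ⟨r x - 1, by omega⟩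
  rw [Phif_eq hr' hfr t C C' x hn, phi_succ, dif_neg (by omega)]

theorem Phif_zero (hr' : IsGrading Q r') (hfr : ∀ x, r' (f x) ≤ r x)
    (t : ∀ x : P, G.obj x →+ H.obj (f x))
    (C : CellularForm P r G) (C' : CellularForm Q r' H)
    (x : P) : Phif hr' hfr t C C' x 0 = 0 := by
  suffices h : ∀ (n : ℕ) (x : P), r x = n → Phif hr' hfr t C C' x 0 = 0 from h _ x rfl
  intro n
  induction n using Nat.strong_induction_on with
  | _ n ih =>
    intro x hx
    match n, hx with
    | 0, hx =>
      rw [Phif_eq hr' hfr t C C' x hx]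
      show (AddEquiv.ofBijective _ _).symm (t x (C.e x x le_rfl hx 0)) = 0
      rw [map_zero, map_zero, map_zero]
    | (n+1), hx =>
      rw [Phif_eq hr' hfr t C C' x hx, phi_succ]
      by_cases h1 : r' (f x) = n + 1
      · rw [dif_pos h1]
        by_cases hc : ∃ v : C'.Λ (f x), ∀ z : Q, C'.δ (f x) z v =
            cch C C' (prev hr' hfr t C C' n) x 0 z
        · rw [dif_pos hc]
          have hprev0 : ∀ y, prev hr' hfr t C C' n y 0 = 0 := by
            intro y
            unfold prev
            by_cases hy : r y = n
            · rw [dif_pos hy, ← Phif_eq hr' hfr t C C' y hy, ih n (by omega) y hy]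
            · rw [dif_neg hy]
          refine delta_inj hr' C' (x := f x) (by omega) fun z => ?_
          rw [hc.choose_spec z, cch_zero C C' hprev0]
        · rw [dif_neg hc]
      · rw [dif_neg h1]

end Main
section Main2

variable {P Q : Type} [PartialOrder P] [PartialOrder Q] {r : P → ℕ} {r' : Q → ℕ}
  {f : P → Q} {G : P ⥤ AddCommGrpCat.{0}} {H : Q ⥤ AddCommGrpCat.{0}}

theorem cch_prev_eq (hr : IsGrading P r) (hr' : IsGrading Q r')
    (hfr : ∀ x, r' (f x) ≤ r x) (t : ∀ x : P, G.obj x →+ H.obj (f x))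
    (C : CellularForm P r G) (C' : CellularForm Q r' H)
    {n : ℕ} {x : P} (hx : r x = n + 1) (a : C.Λ x) (z : Q) :
    cch C C' (prev hr' hfr t C C' n) x a z =
      cch C C' (Phif hr' hfr t C C') x a z := by
  refine finsum_congr fun y => ?_
  by_cases h : f y = z
  · rw [dif_pos h, dif_pos h]
    congr 1
    by_cases hδ : C.δ x y a = 0
    · rw [hδ, Phif_zero]
      unfold prev
      by_cases hy : r y = n
      · rw [dif_pos hy, ← Phif_eq hr' hfr t C C' y hy, Phif_zero]
      · rw [dif_neg hy]
    · have hy : r y = n := by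
        have := hr.2.1 y x (cov_of_delta C hδ); omega
      unfold prev
      rw [dif_pos hy, ← Phif_eq hr' hfr t C C' y hy]
  · rw [dif_neg h, dif_neg h]

theorem crank (hr : IsGrading P r) (hr' : IsGrading Q r') (hf : Monotone f)
    (hfr : ∀ x, r' (f x) ≤ r x) (t : ∀ x : P, G.obj x →+ H.obj (f x))
    (C : CellularForm P r G) (C' : CellularForm Q r' H)
    {n : ℕ} {x : P} (hx : r x = n + 1) (a : C.Λ x) (z : Q)
    (hz : cch C C' (Phif hr' hfr t C C') x a z ≠ 0) : z ≤ f x ∧ r' z = n := by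
  have : ∃ y, (if h : f y = z then
      C'.cast h (Phif hr' hfr t C C' y (C.δ x y a)) else 0) ≠ 0 := by
    by_contra hc; push_neg at hc
    exact hz (finsum_eq_zero_of_forall_eq_zero hc)
  obtain ⟨y, hy⟩ := this
  have hfy : f y = z := by by_contra h; rw [dif_neg h] at hy; exact hy rfl
  rw [dif_pos hfy] at hy
  have hΦ : Phif hr' hfr t C C' y (C.δ x y a) ≠ 0 := by
    intro h; rw [h, map_zero] at hy; exact hy rfl
  have hδ : C.δ x y a ≠ 0 := by
    intro h; rw [h, Phif_zero] at hΦ; exact hΦ rfl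
  have hcov : y ⋖ x := cov_of_delta C hδ
  have hry : r y = n := by have := hr.2.1 y x hcov; omega
  have hle : r y ≤ r' (f y) := by
    by_contra h
    rw [Phif_vanish hr' hfr t C C' y (by omega)] at hΦ
    exact hΦ rfl
  have hr'fy : r' (f y) = n := le_antisymm (hry ▸ hfr y) (hry ▸ hle)
  exact ⟨hfy ▸ hf hcov.le, hfy ▸ hr'fy⟩

theorem cch_add (hr : IsGrading P r) (hr' : IsGrading Q r')
    (hfr : ∀ x, r' (f x) ≤ r x) (t : ∀ x : P, G.obj x →+ H.obj (f x))
    (C : CellularForm P r G) (C' : CellularForm Q r' H)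
    (x : P) (a b : C.Λ x)
    (hIH : ∀ y, y ⋖ x → ∀ u v : C.Λ y,
      Phif hr' hfr t C C' y (u + v) = Phif hr' hfr t C C' y u + Phif hr' hfr t C C' y v)
    (z : Q) :
    cch C C' (Phif hr' hfr t C C') x (a + b) z =
      cch C C' (Phif hr' hfr t C C') x a z + cch C C' (Phif hr' hfr t C C') x b z := by
  set Φ := Phif hr' hfr t C C' with hΦdef
  have hz0 : ∀ y, Φ y 0 = 0 := Phif_zero hr' hfr t C C'
  have key : ∀ y : P, (if h : f y = z then C'.cast h (Φ y (C.δ x y (a + b))) else 0) =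
      (if h : f y = z then C'.cast h (Φ y (C.δ x y a)) else 0) +
      (if h : f y = z then C'.cast h (Φ y (C.δ x y b)) else 0) := by
    intro y
    by_cases h : f y = z
    · rw [dif_pos h, dif_pos h, dif_pos h, ← map_add]
      congr 1
      rw [map_add]
      by_cases hcov : y ⋖ x
      · exact hIH y hcov _ _
      · rw [C.delta_support x y hcov]
        simp only [AddMonoidHom.zero_apply, add_zero, hz0]
    · rw [dif_neg h, dif_neg h, dif_neg h, add_zero]
  unfold cch
  rw [finsum_congr key]
  exact finsum_add_distrib
    ((C.delta_fin x a).subset (cch_term_supp C C' hz0 x a z))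
    ((C.delta_fin x b).subset (cch_term_supp C C' hz0 x b z))

theorem cyc (hr : IsGrading P r) (hr' : IsGrading Q r')
    (hfr : ∀ x, r' (f x) ≤ r x) (t : ∀ x : P, G.obj x →+ H.obj (f x))
    (C : CellularForm P r G) (C' : CellularForm Q r' H)
    {n : ℕ} {x : P} (hx : r x = n + 1) (a : C.Λ x)
    (IH1 : ∀ y : P, r y ≤ n → ∀ (b : C.Λ y) (z : Q),
      cch C C' (Phif hr' hfr t C C') y b z = C'.δ (f y) z (Phif hr' hfr t C C' y b))
    (IH2 : ∀ u : P, r u ≤ n → ∀ b c : C.Λ u,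
      Phif hr' hfr t C C' u (b + c) = Phif hr' hfr t C C' u b + Phif hr' hfr t C C' u c)
    (w : Q) :
    ∑ᶠ z : Q, C'.δ z w (cch C C' (Phif hr' hfr t C C') x a z) = 0 := by
  set Φ := Phif hr' hfr t C C' with hΦdef
  have hz0 : ∀ y, Φ y 0 = 0 := Phif_zero hr' hfr t C C'
  have hsfin : {y : P | C.δ x y a ≠ 0}.Finite := C.delta_fin x a
  -- step 1: push δ' inside the finsum
  have step1 : ∀ z : Q, C'.δ z w (cch C C' Φ x a z) =
      ∑ᶠ y : P, C'.δ z w (if h : f y = z then C'.cast h (Φ y (C.δ x y a)) else 0) :=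
    fun z => (C'.δ z w).map_finsum (hsfin.subset (cch_term_supp C C' hz0 x a z))
  rw [finsum_congr step1]
  -- step 2: swap the two finsums
  rw [finsum_swap _ (f '' {y : P | C.δ x y a ≠ 0}) {y : P | C.δ x y a ≠ 0}
    (hsfin.image f) hsfin ?_]
  swap
  · intro z y hzy
    have hne : (if h : f y = z then C'.cast h (Φ y (C.δ x y a)) else 0) ≠ 0 := by
      intro h0; rw [h0, map_zero] at hzy; exact hzy rfl
    have hfy : f y = z := by by_contra h; rw [dif_neg h] at hne; exact hne rfl
    have hδ : C.δ x y a ≠ 0 := by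
      intro h
      rw [dif_pos hfy, h, hz0, map_zero] at hne
      exact hne rfl
    exact ⟨⟨y, hδ, hfy⟩, hδ⟩
  -- step 3: compute the inner sums
  have step3 : ∀ y : P,
      (∑ᶠ z : Q, C'.δ z w (if h : f y = z then C'.cast h (Φ y (C.δ x y a)) else 0)) =
        cch C C' Φ y (C.δ x y a) w := by
    intro y
    rw [finsum_eq_single _ (f y) (fun z hz => by rw [dif_neg (fun h => hz h.symm), map_zero])]
    rw [dif_pos rfl, cast_self]
    by_cases hδ : C.δ x y a = 0
    · rw [hδ, hz0, map_zero, cch_zero C C' hz0]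
    · have hy : r y ≤ n := by
        have := hr.2.1 y x (cov_of_delta C hδ); omega
      exact (IH1 y hy _ w).symm
  rw [finsum_congr step3]
  -- step 4: unfold cch again and swap
  have step4 : ∀ y : P, cch C C' Φ y (C.δ x y a) w =
      ∑ᶠ u : P, if h : f u = w then C'.cast h (Φ u (C.δ y u (C.δ x y a))) else 0 :=
    fun y => rfl
  rw [finsum_congr step4]
  rw [finsum_swap _ {y : P | C.δ x y a ≠ 0}
    (⋃ y ∈ {y : P | C.δ x y a ≠ 0}, {u : P | C.δ y u (C.δ x y a) ≠ 0})
    hsfin (hsfin.biUnion fun y _ => C.delta_fin y (C.δ x y a)) ?_]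
  swap
  · intro y u hyu
    have hδ2 : C.δ y u (C.δ x y a) ≠ 0 := by
      intro h
      apply hyu
      by_cases hfu : f u = w
      · rw [dif_pos hfu, h, hz0, map_zero]
      · rw [dif_neg hfu]
    have hδ : C.δ x y a ≠ 0 := by
      intro h; rw [h, map_zero] at hδ2; exact hδ2 rfl
    exact ⟨hδ, Set.mem_biUnion hδ hδ2⟩
  -- step 5: each inner sum (over y, for fixed u) vanishes
  refine finsum_eq_zero_of_forall_eq_zero fun u => ?_
  by_cases hfu : f u = w
  · simp only [dif_pos hfu]
    by_cases hex : ∃ y : P, C.δ y u (C.δ x y a) ≠ 0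
    · obtain ⟨y0, hy0⟩ := hex
      have hδ0 : C.δ x y0 a ≠ 0 := by
        intro h; rw [h, map_zero] at hy0; exact hy0 rfl
      have hru : r u ≤ n := by
        have h1 := hr.2.1 u y0 (cov_of_delta C hy0)
        have h2 := hr.2.1 y0 x (cov_of_delta C hδ0)
        omega
      set gu : C.Λ u →+ C'.Λ (f u) := AddMonoidHom.mk' (Φ u) (IH2 u hru) with hgu
      have hfin2 : (Function.support fun y : P => C.δ y u (C.δ x y a)).Finite := by
        refine hsfin.subset fun y hy => ?_
        simp only [Function.mem_support] at hy
        intro h; rw [h, map_zero] at hy; exact hy rfl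
      have hfin3 : (Function.support fun y : P => gu (C.δ y u (C.δ x y a))).Finite := by
        refine hfin2.subset fun y hy => ?_
        simp only [Function.mem_support] at hy ⊢
        intro h; rw [h] at hy; exact hy (map_zero gu)
      calc (∑ᶠ y : P, C'.cast hfu (Φ u (C.δ y u (C.δ x y a))))
          = ∑ᶠ y : P, C'.cast hfu (gu (C.δ y u (C.δ x y a))) := rfl
        _ = C'.cast hfu (∑ᶠ y : P, gu (C.δ y u (C.δ x y a))) :=
            ((C'.cast hfu).map_finsum hfin3).symm
        _ = C'.cast hfu (gu (∑ᶠ y : P, C.δ y u (C.δ x y a))) := by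
            rw [(gu.map_finsum hfin2).symm]
        _ = 0 := by rw [C.delta_delta x u a, map_zero, map_zero]
    · push_neg at hex
      refine finsum_eq_zero_of_forall_eq_zero fun y => ?_
      rw [hex y, hz0, map_zero]
  · refine finsum_eq_zero_of_forall_eq_zero fun y => ?_
    rw [dif_neg hfu]

end Main2
section Main3

variable {P Q : Type} [PartialOrder P] [PartialOrder Q] {r : P → ℕ} {r' : Q → ℕ}
  {f : P → Q} {G : P ⥤ AddCommGrpCat.{0}} {H : Q ⥤ AddCommGrpCat.{0}}

/-- The key computation at rank one: the image of `Φ(∂a)` in `H(f x)` under `e'`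
vanishes, because `∂a` is a boundary and `Φ`, `t`, `e`, `e'` are all compatible. -/
theorem lemE (hr : IsGrading P r) (hr' : IsGrading Q r') (hf : Monotone f)
    (hfr : ∀ x, r' (f x) ≤ r x) (t : ∀ x : P, G.obj x →+ H.obj (f x))
    (ht : ∀ (x y : P) (h : x ≤ y) (a : G.obj x),
      t y (G.map (homOfLE h) a) = H.map (homOfLE (hf h)) (t x a))
    (C : CellularForm P r G) (C' : CellularForm Q r' H)
    {x : P} (hx : r x = 1) (a : C.Λ x) :
    (∑ᶠ z : Q, if h : z ≤ f x ∧ r' z = 0 then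
      C'.e (f x) z h.1 h.2 (cch C C' (Phif hr' hfr t C C') x a z) else 0) = 0 := by
  set Φ := Phif hr' hfr t C C' with hΦdef
  have hz0 : ∀ y, Φ y 0 = 0 := Phif_zero hr' hfr t C C'
  have hsfin : {y : P | C.δ x y a ≠ 0}.Finite := C.delta_fin x a
  -- step 1: push e' inside the finsum
  have step1 : ∀ z : Q, (if h : z ≤ f x ∧ r' z = 0 then
      C'.e (f x) z h.1 h.2 (cch C C' Φ x a z) else 0) =
      ∑ᶠ y : P, (if h : z ≤ f x ∧ r' z = 0 then
        C'.e (f x) z h.1 h.2 (if h' : f y = z then C'.cast h' (Φ y (C.δ x y a)) else 0)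
        else 0) := by
    intro z
    by_cases h : z ≤ f x ∧ r' z = 0
    · simp only [dif_pos h]
      exact (C'.e (f x) z h.1 h.2).map_finsum
        (hsfin.subset (cch_term_supp C C' hz0 x a z))
    · simp only [dif_neg h]
      exact (finsum_eq_zero_of_forall_eq_zero fun y => rfl).symm
  rw [finsum_congr step1]
  -- step 2: swap
  rw [finsum_swap _ (f '' {y : P | C.δ x y a ≠ 0}) {y : P | C.δ x y a ≠ 0}
    (hsfin.image f) hsfin ?_]
  swap
  · intro z y hzy
    by_cases h : z ≤ f x ∧ r' z = 0
    · rw [dif_pos h] at hzy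
      have hne : (if h' : f y = z then C'.cast h' (Φ y (C.δ x y a)) else 0) ≠ 0 := by
        intro h0; rw [h0, map_zero] at hzy; exact hzy rfl
      have hfy : f y = z := by by_contra hc; rw [dif_neg hc] at hne; exact hne rfl
      have hδ : C.δ x y a ≠ 0 := by
        intro hc; rw [dif_pos hfy, hc, hz0, map_zero] at hne; exact hne rfl
      exact ⟨⟨y, hδ, hfy⟩, hδ⟩
    · rw [dif_neg h] at hzy; exact absurd rfl hzy
  -- step 3: compute the inner sums over z
  have step3 : ∀ y : P,
      (∑ᶠ z : Q, if h : z ≤ f x ∧ r' z = 0 then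
        C'.e (f x) z h.1 h.2 (if h' : f y = z then C'.cast h' (Φ y (C.δ x y a)) else 0)
        else 0) =
      (if h : f y ≤ f x ∧ r' (f y) = 0 then
        C'.e (f x) (f y) h.1 h.2 (Φ y (C.δ x y a)) else 0) := by
    intro y
    rw [finsum_eq_single _ (f y) (fun z hz => by
      by_cases h : z ≤ f x ∧ r' z = 0
      · rw [dif_pos h, dif_neg (fun hc => hz hc.symm), map_zero]
      · rw [dif_neg h])]
    by_cases h : f y ≤ f x ∧ r' (f y) = 0
    · rw [dif_pos h, dif_pos h, dif_pos rfl, cast_self]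
    · rw [dif_neg h, dif_neg h]
  rw [finsum_congr step3]
  -- step 4: identify each term with `t x` applied to the corresponding `e`-term
  have step4 : ∀ y : P,
      (if h : f y ≤ f x ∧ r' (f y) = 0 then
        C'.e (f x) (f y) h.1 h.2 (Φ y (C.δ x y a)) else 0) =
      t x (if h : y ≤ x ∧ r y = 0 then C.e x y h.1 h.2 (C.δ x y a) else 0) := by
    intro y
    by_cases hδ : C.δ x y a = 0
    · rw [hδ]
      have h1 : (if h : f y ≤ f x ∧ r' (f y) = 0 then
          C'.e (f x) (f y) h.1 h.2 (Φ y 0) else 0) = 0 := by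
        by_cases h : f y ≤ f x ∧ r' (f y) = 0
        · rw [dif_pos h, hz0, map_zero]
        · rw [dif_neg h]
      rw [h1]
      by_cases h : y ≤ x ∧ r y = 0
      · rw [dif_pos h, map_zero, map_zero]
      · rw [dif_neg h, map_zero]
    · have hcov : y ⋖ x := cov_of_delta C hδ
      have hy0 : r y = 0 := by have := hr.2.1 y x hcov; omega
      have hyx : y ≤ x := hcov.le
      have h0' : r' (f y) = 0 := Nat.le_zero.mp ((hfr y).trans hy0.le)
      rw [dif_pos ⟨hf hyx, h0'⟩, dif_pos ⟨hyx, hy0⟩]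
      set b := C.δ x y a with hb
      -- unfold Φ at the rank-zero element y
      have hΦy : Φ y b = (AddEquiv.ofBijective
          (C'.e (f y) (f y) le_rfl (Nat.le_zero.mp ((hfr y).trans hy0.le)))
          (e_bij hr' C' _)).symm (t y (C.e y y le_rfl hy0 b)) := by
        rw [hΦdef, Phif_eq hr' hfr t C C' y hy0]
        rfl
      have sub2 : C'.e (f y) (f y) le_rfl h0' (Φ y b) = t y (C.e y y le_rfl hy0 b) := by
        rw [hΦy]
        exact AddEquiv.ofBijective_apply_symm_apply _ _
      have sub1 : C'.e (f x) (f y) (hf hyx) h0' (Φ y b) =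
          H.map (homOfLE (hf hyx)) (C'.e (f y) (f y) le_rfl h0' (Φ y b)) :=
        (C'.e_natural (f y) (f x) (f y) le_rfl (hf hyx) h0' (Φ y b)).symm
      rw [sub1, sub2, ← ht y x hyx, C.e_natural y x y le_rfl hyx hy0]
  rw [finsum_congr step4]
  -- step 5: pull `t x` out
  have hWsupp : (Function.support fun y : P =>
      (if h : y ≤ x ∧ r y = 0 then C.e x y h.1 h.2 (C.δ x y a) else 0)) ⊆
      {y : P | C.δ x y a ≠ 0} := by
    intro y hy
    simp only [Function.mem_support] at hy
    intro hc
    apply hy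
    by_cases h : y ≤ x ∧ r y = 0
    · rw [dif_pos h, hc, map_zero]
    · rw [dif_neg h]
  rw [← (t x).map_finsum (hsfin.subset hWsupp)]
  -- step 6: the chain `∂a` is a boundary, so its class in `G x` vanishes
  have hker : (∑ᶠ y : P, if h : y ≤ x ∧ r y = 0 then
      C.e x y h.1 h.2 (C.δ x y a) else 0) = 0 := by
    refine (C.e_ker x (fun y => C.δ x y a) hsfin (fun y hy => ?_)).mpr ?_
    · have hcov : y ⋖ x := cov_of_delta C hy
      have := hr.2.1 y x hcov
      exact ⟨hcov.le, by omega⟩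
    · refine ⟨fun u => if h : x = u then C.cast h a else 0, ?_, ?_, ?_⟩
      · refine (Set.finite_singleton x).subset fun u hu => ?_
        simp only [Set.mem_setOf_eq] at hu
        by_contra hc
        rw [dif_neg (by simpa [eq_comm] using hc)] at hu
        exact hu rfl
      · intro u hu
        dsimp only at hu
        have hux : x = u := by
          by_contra hc; rw [dif_neg hc] at hu; exact hu rfl
        subst hux
        exact ⟨le_rfl, hx⟩
      · intro y
        rw [finsum_eq_single _ x (fun w hw => by
          dsimp only
          rw [dif_neg (fun hc => hw hc.symm), map_zero])]
        dsimp only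
        rw [dif_pos rfl, cast_self]
  rw [hker, map_zero]

end Main3
section Main4

variable {P Q : Type} [PartialOrder P] [PartialOrder Q] {r : P → ℕ} {r' : Q → ℕ}
  {f : P → Q} {G : P ⥤ AddCommGrpCat.{0}} {H : Q ⥤ AddCommGrpCat.{0}}

theorem mainInd (hr : IsGrading P r) (hr' : IsGrading Q r') (hf : Monotone f)
    (hfr : ∀ x, r' (f x) ≤ r x) (t : ∀ x : P, G.obj x →+ H.obj (f x))
    (ht : ∀ (x y : P) (h : x ≤ y) (a : G.obj x),
      t y (G.map (homOfLE h) a) = H.map (homOfLE (hf h)) (t x a))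
    (C : CellularForm P r G) (C' : CellularForm Q r' H) :
    ∀ (n : ℕ) (x : P), r x = n →
      (∀ (a : C.Λ x) (z : Q), cch C C' (Phif hr' hfr t C C') x a z =
        C'.δ (f x) z (Phif hr' hfr t C C' x a)) ∧
      (∀ a b : C.Λ x, Phif hr' hfr t C C' x (a + b) =
        Phif hr' hfr t C C' x a + Phif hr' hfr t C C' x b) := by
  set Φ := Phif hr' hfr t C C' with hΦdef
  have hz0 : ∀ y, Φ y 0 = 0 := Phif_zero hr' hfr t C C'
  intro n
  induction n using Nat.strong_induction_on with
  | _ n ih =>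
    intro x hx
    match n, hx with
    | 0, hx =>
      constructor
      · intro a z
        have hδ0 : ∀ y : P, C.δ x y a = 0 := by
          intro y
          rw [C.delta_support x y (fun hcov => by have := hr.2.1 y x hcov; omega)]
          rfl
        have h1 : cch C C' Φ x a z = 0 := by
          refine finsum_eq_zero_of_forall_eq_zero fun y => ?_
          by_cases h : f y = z
          · rw [dif_pos h, hδ0 y, hz0, map_zero]
          · rw [dif_neg h]
        have h0' : r' (f x) = 0 := Nat.le_zero.mp ((hfr x).trans hx.le)
        have h2 : C'.δ (f x) z (Φ x a) = 0 := by
          rw [C'.delta_support (f x) z (fun hcov => by have := hr'.2.1 z (f x) hcov; omega)]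
          rfl
        rw [h1, h2]
      · intro a b
        rw [hΦdef, Phif_eq hr' hfr t C C' x hx, Phif_eq hr' hfr t C C' x hx,
          Phif_eq hr' hfr t C C' x hx]
        show (AddEquiv.ofBijective _ _).symm (t x (C.e x x le_rfl hx (a + b))) = _
        rw [map_add, map_add, map_add]
        rfl
    | (n+1), hx =>
      have IH1 : ∀ y : P, r y ≤ n → ∀ (b : C.Λ y) (z : Q),
          cch C C' Φ y b z = C'.δ (f y) z (Φ y b) :=
        fun y hy => (ih (r y) (by omega) y rfl).1
      have IH2 : ∀ u : P, r u ≤ n → ∀ b c : C.Λ u, Φ u (b + c) = Φ u b + Φ u c :=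
        fun u hu => (ih (r u) (by omega) u rfl).2
      have hcfin : ∀ a : C.Λ x, {z : Q | cch C C' Φ x a z ≠ 0}.Finite :=
        fun a => ((C.delta_fin x a).image f).subset (cch_supp C C' hz0 x a)
      by_cases heq : r' (f x) = n + 1
      · -- the rank is preserved: construct the value as a preimage under δ'
        have hex : ∀ a : C.Λ x, ∃ v : C'.Λ (f x),
            ∀ z : Q, C'.δ (f x) z v = cch C C' Φ x a z := by
          intro a
          have hcr : ∀ z : Q, cch C C' Φ x a z ≠ 0 → z ≤ f x ∧ r' z = n :=
            fun z hz => crank hr hr' hf hfr t C C' hx a z hz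
          have key : ∃ b : ∀ w : Q, C'.Λ w, {w : Q | b w ≠ 0}.Finite ∧
              (∀ w, b w ≠ 0 → w ≤ f x ∧ r' w = n + 1) ∧
              ∀ z, cch C C' Φ x a z = ∑ᶠ w : Q, C'.δ w z (b w) := by
            match n with
            | 0 =>
              exact (C'.e_ker (f x) (cch C C' Φ x a) (hcfin a) hcr).mp
                (lemE hr hr' hf hfr t ht C C' hx a)
            | (m+1) =>
              exact C'.exact_pos (f x) m (cch C C' Φ x a) (hcfin a) hcr
                (cyc hr hr' hfr t C C' hx a IH1 IH2)
          obtain ⟨b, hbfin, hbrank, hab⟩ := key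
          refine ⟨b (f x), fun z => ?_⟩
          rw [hab z, finsum_eq_single _ (f x) (fun w hw => ?_)]
          have hbw : b w = 0 := by
            by_contra hbw
            exact hw (rank_eq hr' (hbrank w hbw).1 (by rw [(hbrank w hbw).2, heq]))
          rw [hbw, map_zero]
        have hval : ∀ (a : C.Λ x) (z : Q),
            C'.δ (f x) z (Φ x a) = cch C C' Φ x a z := by
          intro a z
          rw [hΦdef, Phif_eq hr' hfr t C C' x hx, phi_succ hr' hfr t C C' n x hx a,
            dif_pos heq]
          have hc : ∃ v : C'.Λ (f x), ∀ z : Q, C'.δ (f x) z v =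
              cch C C' (prev hr' hfr t C C' n) x a z := by
            obtain ⟨v, hv⟩ := hex a
            exact ⟨v, fun z => by
              rw [cch_prev_eq hr hr' hfr t C C' hx]; exact hv z⟩
          rw [dif_pos hc, ← cch_prev_eq hr hr' hfr t C C' hx a z]
          exact hc.choose_spec z
        refine ⟨fun a z => (hval a z).symm, fun a b => ?_⟩
        have hsub : Φ x (a + b) - (Φ x a + Φ x b) = 0 := by
          refine delta_inj hr' C' (x := f x) (by omega) fun z => ?_
          rw [map_sub, map_add, hval, hval, hval,
            cch_add hr hr' hfr t C C' x a b (fun y hcov u v =>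
              IH2 y (by have := hr.2.1 y x hcov; omega) u v), sub_self]
        exact sub_eq_zero.mp hsub
      · -- the rank drops: Φ vanishes on Λ_x and the candidate chain is zero
        have hlt : r' (f x) < n + 1 := lt_of_le_of_ne (hx ▸ hfr x) heq
        have hvan : ∀ a : C.Λ x, Φ x a = 0 :=
          fun a => Phif_vanish hr' hfr t C C' x (by omega) a
        constructor
        · intro a z
          rw [hvan a, map_zero]
          by_contra hc
          obtain ⟨hzle, hzr⟩ := crank hr hr' hf hfr t C C' hx a z hc
          have hfxn : r' (f x) = n := by
            have := rank_mono hr' hzle; omega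
          have hzfx : z = f x := rank_eq hr' hzle (by omega)
          subst hzfx
          -- show the component at `f x` vanishes, contradiction
          apply hc
          match n, hx, heq, hlt, hfxn, IH1, IH2 with
          | 0, hx, heq, hlt, hfxn, IH1, IH2 =>
            -- rank-one case: use the `e`-identification
            have hsum := lemE hr hr' hf hfr t ht C C' hx a
            rw [finsum_eq_single _ (f x) (fun w hw => by
              by_cases h : w ≤ f x ∧ r' w = 0
              · exact absurd (rank_eq hr' h.1 (by omega)) hw
              · rw [dif_neg h])] at hsum
            rw [dif_pos ⟨le_rfl, hfxn⟩] at hsum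
            exact e_inj hr' C' hfxn hsum
          | (m+1), hx, heq, hlt, hfxn, IH1, IH2 =>
            -- positive-rank case: a top-degree cycle is zero
            have hcycle := cyc hr hr' hfr t C C' hx a IH1 IH2
            refine delta_inj hr' C' (x := f x) (by omega) fun w => ?_
            have := hcycle w
            rw [finsum_eq_single _ (f x) (fun z hz => ?_)] at this
            · exact this
            · have hz0' : cch C C' Φ x a z = 0 := by
                by_contra hcz
                obtain ⟨hle2, hr2⟩ := crank hr hr' hf hfr t C C' hx a z hcz
                exact hz (rank_eq hr' hle2 (by omega))
              rw [hz0', map_zero]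
        · intro a b
          rw [hvan, hvan, hvan, add_zero]

end Main4

/-- **Statement 4 (morphisms of cellular forms).**  Let `f : P → Q` be order preserving
between graded posets with `r(f(x)) ≤ r(x)`, let `t : G ⇝ H` be an `f`-homomorphism of
copresheaves, and let `Λ(P,G)`, `Λ(Q,H)` be cellular forms.  Then there is a unique
morphism of cellular forms `Φ` associated with `f, t` (conditions (1)–(3) of
`IsCellularMorphism`), and moreover this `Φ` commutes with the differentials on every
`Λ(P,G)_x`, whether `r(f(x)) = r(x)` or not. -/
theorem statement4 (P Q : Type) [PartialOrder P] [PartialOrder Q]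
    (r : P → ℕ) (r' : Q → ℕ) (hr : IsGrading P r) (hr' : IsGrading Q r')
    (f : P → Q) (hf : Monotone f) (hfr : ∀ x, r' (f x) ≤ r x)
    (G : P ⥤ AddCommGrpCat.{0}) (H : Q ⥤ AddCommGrpCat.{0})
    (t : ∀ x : P, G.obj x →+ H.obj (f x))
    (ht : ∀ (x y : P) (h : x ≤ y) (a : G.obj x),
      t y (G.map (homOfLE h) a) = H.map (homOfLE (hf h)) (t x a))
    (C : CellularForm P r G) (C' : CellularForm Q r' H) :
    (∃! Φ : ∀ x : P, C.Λ x →+ C'.Λ (f x), IsCellularMorphism hfr t C C' Φ) ∧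
    (∀ Φ : ∀ x : P, C.Λ x →+ C'.Λ (f x), IsCellularMorphism hfr t C C' Φ →
      ∀ (x : P) (a : C.Λ x) (z : Q),
        (∑ᶠ y : P, if h : f y = z then (C'.cast h) (Φ y (C.δ x y a)) else 0) =
          C'.δ (f x) z (Φ x a)) := by
  classical
  have hM := mainInd hr hr' hf hfr t ht C C'
  set Φ : ∀ x : P, C.Λ x →+ C'.Λ (f x) := fun x =>
    AddMonoidHom.mk' (Phif hr' hfr t C C' x) (fun a b => (hM (r x) x rfl).2 a b) with hΦdef
  have hmor : IsCellularMorphism hfr t C C' Φ := by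
    refine ⟨?_, ?_, ?_⟩
    · intro x _hrx a z
      exact (hM (r x) x rfl).1 a z
    · intro x hlt
      ext a
      exact Phif_vanish hr' hfr t C C' x hlt a
    · intro x h0 a
      have key : Phif hr' hfr t C C' x a = (AddEquiv.ofBijective
          (C'.e (f x) (f x) le_rfl (Nat.le_zero.mp ((hfr x).trans h0.le)))
          (e_bij hr' C' _)).symm (t x (C.e x x le_rfl h0 a)) := by
        rw [Phif_eq hr' hfr t C C' x h0]; rfl
      show C'.e (f x) (f x) le_rfl _ (Phif hr' hfr t C C' x a) = _
      rw [key]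
      exact AddEquiv.ofBijective_apply_symm_apply _ _
  have huniq : ∀ Ψ : ∀ x : P, C.Λ x →+ C'.Λ (f x),
      IsCellularMorphism hfr t C C' Ψ → Ψ = Φ := by
    intro Ψ hΨ
    obtain ⟨h1, h2, h3⟩ := hΨ
    have key : ∀ (n : ℕ) (x : P), r x = n → ∀ a : C.Λ x, Ψ x a = Φ x a := by
      intro n
      induction n using Nat.strong_induction_on with
      | _ n ih =>
        intro x hx a
        match n, hx with
        | 0, hx =>
          have h0' : r' (f x) = 0 := Nat.le_zero.mp ((hfr x).trans hx.le)
          have e1 := h3 x hx a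
          have e2 := hmor.2.2 x hx a
          have hsub : C'.e (f x) (f x) le_rfl h0' (Ψ x a - Φ x a) = 0 := by
            rw [map_sub, e1, e2, sub_self]
          exact sub_eq_zero.mp (e_inj hr' C' h0' hsub)
        | (m+1), hx =>
          by_cases heq : r' (f x) = r x
          · have key2 : ∀ z : Q, C'.δ (f x) z (Ψ x a) = C'.δ (f x) z (Φ x a) := by
              intro z
              rw [← h1 x heq a z, ← hmor.1 x heq a z]
              refine finsum_congr fun y => ?_
              by_cases hfy : f y = z
              · rw [dif_pos hfy, dif_pos hfy]
                congr 1
                by_cases hδ : C.δ x y a = 0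
                · rw [hδ, map_zero, map_zero]
                · have hry : r y = m := by
                    have := hr.2.1 y x (cov_of_delta C hδ); omega
                  rw [ih m (by omega) y hry _]
              · rw [dif_neg hfy, dif_neg hfy]
            have hsub := delta_inj hr' C' (x := f x) (by omega)
              (v := Ψ x a - Φ x a) (fun z => by rw [map_sub, key2 z, sub_self])
            exact sub_eq_zero.mp hsub
          · have hlt : r' (f x) < r x := lt_of_le_of_ne (hfr x) heq
            rw [h2 x hlt, hmor.2.1 x hlt]
    funext x
    ext a
    exact key (r x) x rfl a
  refine ⟨⟨Φ, hmor, huniq⟩, ?_⟩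
  intro Ψ hΨ x a z
  rw [huniq Ψ hΨ]
  exact (hM (r x) x rfl).1 a z
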